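/- (General conditional independence from masking) In the masked-data model, let S ⊆ {1,…,n} be any set of positions, j ∈ S, a ∈ A, and let values x_k ∈ A for k ∉ S be such that P(X_k = x_k for all k ∉ S) > 0. Then P( X_j = a | Y_k = some x_k for all k ∉ S, and Y_k = none for all k ∈ S ) is well defined and equals P( X_j = a | X_k = x_k for all k ∉ S ). In particular (taking S = {j}), the full-context masked conditional P( X_j = a | Y_j = none, Y_k = some x_k for all k ≠ j ) equals the conditional P( X_j = a | X_k = x_k for all k ≠ j ) of the joint distribution P, so the learned conditionals are the conditionals of the single joint distribution P and hence compatible. -/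
import Mathlib


/-- The joint distribution of `(X, Z)` in the masked-data model: `X ~ P` and the mask
indicators `Z_j` are i.i.d. Bernoulli(q), independent of `X`. -/
noncomputable def maskedJoint {A : Type*} {n : ℕ} (P : (Fin n → A) → ℝ) (q : ℝ) :
    (Fin n → A) × (Fin n → Bool) → ℝ :=
  fun xz => P xz.1 * ∏ j : Fin n, (if xz.2 j = true then q else 1 - q)

/-- The masked sequence `Y ∈ (Option A)^n`: `Y_j = some X_j` if `Z_j = 0` and
`Y_j = none` (the mask symbol) if `Z_j = 1`. -/
def maskedSeq {A : Type*} {n : ℕ} (xz : (Fin n → A) × (Fin n → Bool)) : Fin n → Option A :=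
  fun j => if xz.2 j = true then none else some (xz.1 j)

/-- The probability of an event `E` under a distribution `μ` on a finite sample space. -/
noncomputable def prFin {Ω : Type*} [Fintype Ω] (μ : Ω → ℝ) (E : Set Ω) : ℝ :=
  ∑ ω, E.indicator μ ω

/-- **General conditional independence from masking.** In the masked-data model, let
`S` be any set of positions, `j ∈ S`, `a ∈ A`, and let values `x_k` for `k ∉ S` satisfy
`P(X_k = x_k for all k ∉ S) > 0`. Then
`P(X_j = a | Y_k = some x_k for all k ∉ S, Y_k = none for all k ∈ S)` is well defined
(the conditioning event has positive probability) and equals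
`P(X_j = a | X_k = x_k for all k ∉ S)`. -/
theorem masked_conditional_independence
    {A : Type*} [Fintype A] [Nonempty A] {n : ℕ} (hn : 1 ≤ n)
    (P : (Fin n → A) → ℝ) (hP0 : ∀ w, 0 ≤ P w) (hP1 : ∑ w : Fin n → A, P w = 1)
    (q : ℝ) (hq0 : 0 < q) (hq1 : q < 1)
    (S : Set (Fin n)) (j : Fin n) (hj : j ∈ S) (a : A) (x : Fin n → A)
    (hx : 0 < prFin P {w | ∀ k, k ∉ S → w k = x k}) :
    0 < prFin (maskedJoint P q)
        {xz | (∀ k, k ∉ S → maskedSeq xz k = some (x k)) ∧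
              (∀ k, k ∈ S → maskedSeq xz k = none)} ∧
    prFin (maskedJoint P q)
        {xz | xz.1 j = a ∧ (∀ k, k ∉ S → maskedSeq xz k = some (x k)) ∧
              (∀ k, k ∈ S → maskedSeq xz k = none)} /
      prFin (maskedJoint P q)
        {xz | (∀ k, k ∉ S → maskedSeq xz k = some (x k)) ∧
              (∀ k, k ∈ S → maskedSeq xz k = none)} =
    prFin P {w | w j = a ∧ ∀ k, k ∉ S → w k = x k} /
      prFin P {w | ∀ k, k ∉ S → w k = x k} := by
  classical
  set z₀ : Fin n → Bool := fun k => decide (k ∈ S) with hz₀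
  set c : ℝ := ∏ k : Fin n, (if z₀ k = true then q else 1 - q) with hc
  have hcpos : 0 < c := by
    rw [hc]; apply Finset.prod_pos; intro k _; split <;> linarith
  have key : ∀ (T : Set (Fin n → A)),
      prFin (maskedJoint P q)
        {xz | xz.1 ∈ T ∧ (∀ k, k ∉ S → maskedSeq xz k = some (x k)) ∧
              (∀ k, k ∈ S → maskedSeq xz k = none)} =
      c * prFin P {w | w ∈ T ∧ ∀ k, k ∉ S → w k = x k} := by
    intro T
    rw [prFin, prFin, Fintype.sum_prod_type, Finset.mul_sum]
    apply Finset.sum_congr rfl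
    intro w _
    rw [Finset.sum_eq_single z₀]
    · by_cases h : w ∈ T ∧ ∀ k, k ∉ S → w k = x k
      · have hm1 : (w, z₀) ∈ {xz : (Fin n → A) × (Fin n → Bool) |
            xz.1 ∈ T ∧ (∀ k, k ∉ S → maskedSeq xz k = some (x k)) ∧
            (∀ k, k ∈ S → maskedSeq xz k = none)} := by
          refine ⟨h.1, ?_, ?_⟩
          · intro k hk
            simp [maskedSeq, hz₀, hk, h.2 k hk]
          · intro k hk
            simp [maskedSeq, hz₀, hk]
        have hm2 : w ∈ {w : Fin n → A | w ∈ T ∧ ∀ k, k ∉ S → w k = x k} := h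
        rw [Set.indicator_of_mem hm1, Set.indicator_of_mem hm2 P]
        simp only [maskedJoint]
        rw [← hc]; ring
      · have hm1 : (w, z₀) ∉ {xz : (Fin n → A) × (Fin n → Bool) |
            xz.1 ∈ T ∧ (∀ k, k ∉ S → maskedSeq xz k = some (x k)) ∧
            (∀ k, k ∈ S → maskedSeq xz k = none)} := by
          rintro ⟨h1, h2, h3⟩
          apply h
          refine ⟨h1, fun k hk => ?_⟩
          have := h2 k hk
          simp [maskedSeq, hz₀, hk] at this
          exact this
        have hm2 : w ∉ {w : Fin n → A | w ∈ T ∧ ∀ k, k ∉ S → w k = x k} := h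
        rw [Set.indicator_of_notMem hm1, Set.indicator_of_notMem hm2 P, mul_zero]
    · intro z _ hz
      apply Set.indicator_of_notMem
      rintro ⟨h1, h2, h3⟩
      apply hz
      funext k
      by_cases hk : k ∈ S
      · have := h3 k hk
        simp [maskedSeq] at this
        simp [hz₀, hk, this]
      · have := h2 k hk
        simp [maskedSeq] at this
        simp [hz₀, hk, this.1]
    · intro h; exact absurd (Finset.mem_univ z₀) h
  have e1 : {xz : (Fin n → A) × (Fin n → Bool) |
        (∀ k, k ∉ S → maskedSeq xz k = some (x k)) ∧
        (∀ k, k ∈ S → maskedSeq xz k = none)} =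
      {xz | xz.1 ∈ (Set.univ : Set (Fin n → A)) ∧
        (∀ k, k ∉ S → maskedSeq xz k = some (x k)) ∧
        (∀ k, k ∈ S → maskedSeq xz k = none)} := by
    ext xz; simp
  have e2 : {w : Fin n → A | ∀ k, k ∉ S → w k = x k} =
      {w | w ∈ (Set.univ : Set (Fin n → A)) ∧ ∀ k, k ∉ S → w k = x k} := by
    ext w; simp
  have hden := key Set.univ
  have hnum := key {w | w j = a}
  rw [e1, e2]
  constructor
  · rw [hden]
    refine mul_pos hcpos ?_
    rw [← e2]; exact hx
  · have enum : {xz : (Fin n → A) × (Fin n → Bool) |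
        xz.1 j = a ∧ (∀ k, k ∉ S → maskedSeq xz k = some (x k)) ∧
        (∀ k, k ∈ S → maskedSeq xz k = none)} =
      {xz | xz.1 ∈ {w : Fin n → A | w j = a} ∧
        (∀ k, k ∉ S → maskedSeq xz k = some (x k)) ∧
        (∀ k, k ∈ S → maskedSeq xz k = none)} := rfl
    have enum2 : {w : Fin n → A | w j = a ∧ ∀ k, k ∉ S → w k = x k} =
      {w | w ∈ {w : Fin n → A | w j = a} ∧ ∀ k, k ∉ S → w k = x k} := rfl
    rw [enum, enum2, hnum, hden, mul_div_mul_left _ _ (ne_of_gt hcpos)]
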